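/- Let f : ℝ → ℝ be a polynomial (or an analytic function) and suppose x* is a local minimizer of f. Then for every p ≥ 1, x* is a local minimizer of the Taylor polynomial of f of order p centered at x*, provided that Taylor polynomial is not constant; more precisely, if T_p(x) = Σ_{i=0}^p f^{(i)}(x*)(x−x*)^i/i! is nonconstant, then x* is a local minimizer of T_p. -/

import Mathlib

open Polynomial Filter Topology

lemma iterDeriv_eval (P : Polynomial ℝ) (i : ℕ) :
    iteratedDeriv i (fun t => P.eval t) = fun t => ((Polynomial.derivative)^[i] P).eval t := by
  induction i with
  | zero => simp
  | succ n ih =>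
      rw [iteratedDeriv_succ, ih, Function.iterate_succ_apply']
      funext t
      exact Polynomial.deriv _

lemma factor_lemma (Q : Polynomial ℝ) (k : ℕ) (hk : 1 ≤ k)
    (hlow : ∀ i, 1 ≤ i → i < k → Q.coeff i = 0) :
    ∃ S : Polynomial ℝ, (∀ y : ℝ, Q.eval y = Q.coeff 0 + y ^ k * S.eval y) ∧
      S.eval 0 = Q.coeff k := by
  have hdvd : (X : Polynomial ℝ) ^ k ∣ Q - C (Q.coeff 0) := by
    rw [Polynomial.X_pow_dvd_iff]
    intro d hd
    rcases Nat.eq_zero_or_pos d with rfl | hd1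
    · simp
    · rw [Polynomial.coeff_sub, hlow d hd1 hd, Polynomial.coeff_C,
        if_neg (by omega), sub_zero]
  obtain ⟨S, hS⟩ := hdvd
  refine ⟨S, fun y => ?_, ?_⟩
  · have := congrArg (Polynomial.eval y) hS
    simp only [Polynomial.eval_sub, Polynomial.eval_C, Polynomial.eval_mul,
      Polynomial.eval_pow, Polynomial.eval_X] at this
    linarith
  · have := congrArg (fun q => Polynomial.coeff q k) hS
    simp only [Polynomial.coeff_sub, Polynomial.coeff_C, if_neg (by omega : ¬ k = 0),
      sub_zero] at this
    rw [← Polynomial.coeff_zero_eq_eval_zero, ← Polynomial.coeff_X_pow_mul S k 0]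
    simpa using this.symm

lemma key_lemma (Q : Polynomial ℝ) (hmin : IsLocalMin (fun y => Q.eval y) 0)
    (k : ℕ) (hk : 1 ≤ k) (hck : Q.coeff k ≠ 0)
    (hlow : ∀ i, 1 ≤ i → i < k → Q.coeff i = 0) :
    Even k ∧ 0 < Q.coeff k := by
  obtain ⟨S, hS, hS0⟩ := factor_lemma Q k hk hlow
  have h0 : Q.eval 0 = Q.coeff 0 := (Polynomial.coeff_zero_eq_eval_zero Q).symm
  have hev : ∀ᶠ y in 𝓝 (0:ℝ), 0 ≤ y ^ k * S.eval y := by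
    filter_upwards [hmin] with y hy
    have := hS y
    simp only [h0] at hy
    nlinarith [hS y]
  have hpos : 0 < Q.coeff k := by
    rcases hck.lt_or_gt with hneg | hpos
    · exfalso
      have hUneg : ∀ᶠ y in 𝓝 (0:ℝ), S.eval y < 0 := by
        have : ContinuousAt (fun y => S.eval y) 0 := S.continuousAt
        have := this.eventually_lt continuousAt_const (by rw [hS0]; exact hneg)
        simpa using this
      have := ((hev.and hUneg).filter_mono (nhdsWithin_le_nhds (s := Set.Ioi (0:ℝ)))).and
        self_mem_nhdsWithin
      obtain ⟨y, ⟨h1, h2⟩, hy⟩ := this.exists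
      have : (0:ℝ) < y := hy
      nlinarith [pow_pos this k]
    · exact hpos
  refine ⟨?_, hpos⟩
  by_contra hodd
  rw [Nat.not_even_iff_odd] at hodd
  have hUpos : ∀ᶠ y in 𝓝 (0:ℝ), 0 < S.eval y := by
    have : ContinuousAt (fun y => S.eval y) 0 := S.continuousAt
    have := continuousAt_const.eventually_lt this (by rw [hS0]; exact hpos)
    simpa using this
  have := ((hev.and hUpos).filter_mono (nhdsWithin_le_nhds (s := Set.Iio (0:ℝ)))).and
    self_mem_nhdsWithin
  obtain ⟨y, ⟨h1, h2⟩, hy⟩ := this.exists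
  have hylt : y < 0 := hy
  have : y ^ k < 0 := hodd.pow_neg hylt
  nlinarith

theorem stmt_14 (P : Polynomial ℝ) (xstar : ℝ)
    (hmin : IsLocalMin (fun x => P.eval x) xstar) (p : ℕ) (hp : 1 ≤ p) :
    ¬ (∀ x : ℝ,
        (∑ i ∈ Finset.range (p + 1),
          iteratedDeriv i (fun t => P.eval t) xstar * (x - xstar) ^ i / (Nat.factorial i)) =
        (∑ i ∈ Finset.range (p + 1),
          iteratedDeriv i (fun t => P.eval t) xstar * (xstar - xstar) ^ i / (Nat.factorial i))) →
    IsLocalMin (fun x : ℝ =>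
      ∑ i ∈ Finset.range (p + 1),
        iteratedDeriv i (fun t => P.eval t) xstar * (x - xstar) ^ i / (Nat.factorial i)) xstar := by
  intro hnc
  set Q : Polynomial ℝ := Polynomial.taylor xstar P with hQ
  have hterm : ∀ (i : ℕ) (x : ℝ),
      iteratedDeriv i (fun t => P.eval t) xstar * (x - xstar) ^ i / (Nat.factorial i)
        = Q.coeff i * (x - xstar) ^ i := by
    intro i x
    have h1 : iteratedDeriv i (fun t => P.eval t) xstar
        = ((Polynomial.derivative)^[i] P).eval xstar := by rw [iterDeriv_eval]
    have h2 : ((Polynomial.derivative)^[i] P) = (i.factorial : ℕ) • Polynomial.hasseDeriv i P := by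
      rw [← Polynomial.factorial_smul_hasseDeriv]; rfl
    have h3 : Q.coeff i = (Polynomial.hasseDeriv i P).eval xstar := Polynomial.taylor_coeff (r:=xstar) (f:=P) i
    rw [h1, h2, h3]
    have hfac : (0:ℝ) < (i.factorial : ℝ) := by exact_mod_cast i.factorial_pos
    field_simp
    rw [Polynomial.eval_smul, nsmul_eq_mul]
    ring
  have hQeval : ∀ y : ℝ, Q.eval y = P.eval (y + xstar) := by
    intro y
    rw [hQ, Polynomial.taylor_apply, Polynomial.eval_comp]
    simp
  set R : Polynomial ℝ := ∑ i ∈ Finset.range (p + 1), Polynomial.C (Q.coeff i) * Polynomial.X ^ i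
    with hRdef
  have hReval : ∀ y : ℝ, R.eval y = ∑ i ∈ Finset.range (p + 1), Q.coeff i * y ^ i := by
    intro y; rw [hRdef]; simp [Polynomial.eval_finset_sum]
  have hR : ∀ x : ℝ,
      (∑ i ∈ Finset.range (p + 1),
        iteratedDeriv i (fun t => P.eval t) xstar * (x - xstar) ^ i / (Nat.factorial i))
      = R.eval (x - xstar) := by
    intro x
    rw [hReval]
    exact Finset.sum_congr rfl fun i _ => hterm i x
  have hRcoeff : ∀ n, n ≤ p → R.coeff n = Q.coeff n := by
    intro n hn
    rw [hRdef, Polynomial.finset_sum_coeff]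
    rw [Finset.sum_eq_single n]
    · simp
    · intro b _ hb
      simp [Polynomial.coeff_C_mul, Polynomial.coeff_X_pow, Ne.symm hb]
    · intro h; exact absurd (Finset.mem_range.mpr (by omega)) h
  -- existence of a nonzero coefficient
  have hex : ∃ i, (1 ≤ i ∧ i ≤ p) ∧ Q.coeff i ≠ 0 := by
    by_contra hall
    push_neg at hall
    apply hnc
    intro x
    rw [hR x, hR xstar, hReval, hReval]
    refine Finset.sum_congr rfl fun i hi => ?_
    rcases Nat.eq_zero_or_pos i with rfl | hi1
    · simp
    · rw [hall i ⟨hi1, by simpa [Nat.lt_succ_iff] using hi⟩]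
      simp
  have hex' : ∃ i, 1 ≤ i ∧ Q.coeff i ≠ 0 := ⟨hex.choose, hex.choose_spec.1.1, hex.choose_spec.2⟩
  set k := Nat.find hex' with hkdef
  have hkspec := Nat.find_spec hex'
  have hk1 : 1 ≤ k := hkspec.1
  have hkne : Q.coeff k ≠ 0 := hkspec.2
  have hkle : k ≤ p :=
    le_trans (Nat.find_le ⟨hex.choose_spec.1.1, hex.choose_spec.2⟩) hex.choose_spec.1.2
  have hlow : ∀ i, 1 ≤ i → i < k → Q.coeff i = 0 := by
    intro i h1 h2
    by_contra hne
    exact Nat.find_min hex' h2 ⟨h1, hne⟩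
  -- local min of Q at 0
  have hminQ : IsLocalMin (fun y => Q.eval y) 0 := by
    have ht : Filter.Tendsto (fun y : ℝ => y + xstar) (𝓝 0) (𝓝 xstar) := by
      simpa using (continuous_add_right xstar).tendsto (0:ℝ)
    have := ht.eventually hmin
    filter_upwards [this] with y hy
    rw [hQeval, hQeval]
    simpa using hy
  obtain ⟨hkeven, hkpos⟩ := key_lemma Q hminQ k hk1 hkne hlow
  -- factor R
  obtain ⟨S, hS, hS0⟩ := factor_lemma R k hk1 (by
    intro i h1 h2
    rw [hRcoeff i (le_trans (Nat.le_of_lt h2) hkle)]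
    exact hlow i h1 h2)
  have hS0pos : 0 < S.eval 0 := by rw [hS0, hRcoeff k hkle]; exact hkpos
  have hminR : IsLocalMin (fun y => R.eval y) 0 := by
    have hUpos : ∀ᶠ y in 𝓝 (0:ℝ), 0 < S.eval y := by
      have hc : ContinuousAt (fun y => S.eval y) 0 := S.continuousAt
      have := continuousAt_const.eventually_lt hc hS0pos
      simpa using this
    filter_upwards [hUpos] with y hy
    have h1 := hS y
    have h2 := hS 0
    have hpow : 0 ≤ y ^ k := hkeven.pow_nonneg y
    have hz : (0:ℝ) ^ k = 0 := zero_pow (by omega)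
    rw [hz] at h2
    show R.eval 0 ≤ R.eval y
    nlinarith [mul_nonneg hpow hy.le]
  -- transfer back
  have hfun : (fun x : ℝ =>
      ∑ i ∈ Finset.range (p + 1),
        iteratedDeriv i (fun t => P.eval t) xstar * (x - xstar) ^ i / (Nat.factorial i))
      = fun x => R.eval (x - xstar) := funext hR
  rw [hfun]
  have ht : Filter.Tendsto (fun x : ℝ => x - xstar) (𝓝 xstar) (𝓝 0) := by
    simpa using (continuous_sub_right xstar).tendsto xstar
  have := ht.eventually hminR
  filter_upwards [this] with x hx
  simpa using hx
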